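/- For independent random variables X and Y with X ≥ 0 and Y > 0 (and suitable integrability), E[ln(1 + X/Y)] = ∫₀^∞ (1 − L_X(z)) · L_Y(z) · dz/z, where L_X(z) = E[e^{−zX}] and L_Y(z) = E[e^{−zY}] are the Laplace transforms of X and Y. -/

import Mathlib

open MeasureTheory ProbabilityTheory Real Set

lemma expInt {t : ℝ} (ht : 0 < t) :
    ∫ z in Ioi (0:ℝ), Real.exp (-(z * t)) = 1 / t := by
  have := integral_comp_mul_right_Ioi (fun u => Real.exp (-u)) 0 ht
  simp only [zero_mul, smul_eq_mul, integral_exp_neg_Ioi_zero] at this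
  rw [show (fun z : ℝ => Real.exp (-(z * t))) = fun z : ℝ => (fun u => Real.exp (-u)) (z * t) from rfl] at *
  rw [this]
  ring

lemma expIntegrable {t : ℝ} (ht : 0 < t) :
    IntegrableOn (fun z => Real.exp (-(z * t))) (Ioi (0:ℝ)) := by
  have := exp_neg_integrableOn_Ioi 0 ht
  refine this.congr_fun (fun z _ => by ring_nf) measurableSet_Ioi

lemma prodInt {a b : ℝ} (ha : 0 < a) :
    Integrable (fun p : ℝ × ℝ => Real.exp (-(p.2 * p.1)))
      ((volume.restrict (Ioc a b)).prod (volume.restrict (Ioi (0:ℝ)))) := by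
  have hm : AEStronglyMeasurable (fun p : ℝ × ℝ => Real.exp (-(p.2 * p.1)))
      ((volume.restrict (Ioc a b)).prod (volume.restrict (Ioi (0:ℝ)))) :=
    (Continuous.aestronglyMeasurable (by continuity))
  rw [integrable_prod_iff hm]
  constructor
  · filter_upwards [ae_restrict_mem measurableSet_Ioc] with t ht
    exact expIntegrable (ha.trans_le ht.1.le)
  · have h1 : IntegrableOn (fun t : ℝ => 1 / t) (Ioc a b) := by
      apply (ContinuousOn.integrableOn_Icc ?_).mono_set Ioc_subset_Icc_self
      exact continuousOn_const.div continuousOn_id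
        (fun t ht => ne_of_gt (ha.trans_le ht.1))
    refine h1.congr ?_
    filter_upwards [ae_restrict_mem measurableSet_Ioc] with t ht
    rw [← expInt (ha.trans_le ht.1.le)]
    refine (integral_congr_ae ?_).symm
    filter_upwards with z
    rw [Real.norm_eq_abs, abs_of_pos (Real.exp_pos _)]

lemma sectionInt {a b z : ℝ} (hab : a ≤ b) (hz : 0 < z) :
    ∫ t in Ioc a b, Real.exp (-(z * t)) = (Real.exp (-(z * a)) - Real.exp (-(z * b))) / z := by
  rw [← intervalIntegral.integral_of_le hab]
  have hder : ∀ t ∈ Set.uIcc a b, HasDerivAt (fun t => Real.exp (-(z * t)) * (-(1/z)))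
      (Real.exp (-(z * t))) t := by
    intro t _
    have h1 : HasDerivAt (fun t : ℝ => -(z * t)) (-z) t := by
      simpa using ((hasDerivAt_id t).const_mul z).fun_neg
    have h2 := (Real.hasDerivAt_exp (-(z * t))).comp t h1
    have h3 := h2.mul_const (-(1/z))
    exact h3.congr_deriv (by field_simp)
  rw [intervalIntegral.integral_eq_sub_of_hasDerivAt hder
    (Continuous.intervalIntegrable (by continuity) a b)]
  field_simp
  ring

lemma frullani {a b : ℝ} (ha : 0 < a) (hab : a ≤ b) :
    ∫ z in Ioi (0:ℝ), (Real.exp (-(z * a)) - Real.exp (-(z * b))) / z = Real.log (b / a) := by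
  have h1 : ∫ z in Ioi (0:ℝ), (Real.exp (-(z * a)) - Real.exp (-(z * b))) / z
      = ∫ z in Ioi (0:ℝ), ∫ t in Ioc a b, Real.exp (-(z * t)) := by
    refine setIntegral_congr_fun measurableSet_Ioi (fun z hz => ?_)
    rw [sectionInt hab hz]
  rw [h1, ← integral_integral_swap (f := fun t z => Real.exp (-(z * t))) (prodInt ha)]
  have h2 : ∫ t in Ioc a b, ∫ z in Ioi (0:ℝ), Real.exp (-(z * t)) = ∫ t in Ioc a b, 1 / t := by
    refine setIntegral_congr_fun measurableSet_Ioc (fun t ht => ?_)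
    exact expInt (ha.trans_le ht.1.le)
  rw [h2, ← intervalIntegral.integral_of_le hab, integral_one_div]
  intro h
  rcases Set.mem_uIcc.1 h with ⟨h0, _⟩ | ⟨h0, _⟩
  · exact absurd h0 (not_le.2 ha)
  · exact absurd h0 (not_le.2 (ha.trans_le hab))

lemma frullani_integrable {a b : ℝ} (ha : 0 < a) (hab : a ≤ b) :
    IntegrableOn (fun z => (Real.exp (-(z * a)) - Real.exp (-(z * b))) / z) (Ioi (0:ℝ)) := by
  have := (prodInt (b := b) ha).integral_prod_right
  refine this.congr ?_
  filter_upwards [ae_restrict_mem measurableSet_Ioi] with z hz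
  exact sectionInt hab hz

set_option maxHeartbeats 1000000 in
/-- For independent random variables `X ≥ 0` and `Y > 0`,
`E[ln(1 + X/Y)] = ∫₀^∞ (1 − L_X(z)) L_Y(z) dz/z` where `L_X`, `L_Y` are Laplace transforms. -/
theorem stmt0 {Ω : Type*} [MeasureSpace Ω] [IsProbabilityMeasure (ℙ : Measure Ω)]
    (X Y : Ω → ℝ) (hXm : Measurable X) (hYm : Measurable Y)
    (hindep : IndepFun X Y ℙ)
    (hX : ∀ ω, 0 ≤ X ω) (hY : ∀ ω, 0 < Y ω)
    (hint : Integrable (fun ω => Real.log (1 + X ω / Y ω)) ℙ) :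
    ∫ ω, Real.log (1 + X ω / Y ω) ∂ℙ =
      ∫ z in Set.Ioi (0 : ℝ),
        (1 - ∫ ω, Real.exp (-(z * X ω)) ∂ℙ) * (∫ ω, Real.exp (-(z * Y ω)) ∂ℙ) / z := by
  have hYX : ∀ ω, Y ω ≤ X ω + Y ω := fun ω => le_add_of_nonneg_left (hX ω)
  have key : ∀ ω, Real.log (1 + X ω / Y ω)
      = ∫ z in Ioi (0:ℝ), (Real.exp (-(z * Y ω)) - Real.exp (-(z * (X ω + Y ω)))) / z := by
    intro ω
    rw [frullani (hY ω) (hYX ω)]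
    congr 1
    rw [add_div, div_self (hY ω).ne', add_comm]
  have hexpint : ∀ (z : ℝ) (Z : Ω → ℝ), Measurable Z → (∀ ω, 0 ≤ Z ω) → 0 ≤ z →
      Integrable (fun ω => Real.exp (-(z * Z ω))) ℙ := by
    intro z Z hZm hZ hz
    refine (integrable_const (1:ℝ)).mono'
      (Real.measurable_exp.comp (measurable_const.mul hZm).neg).aestronglyMeasurable ?_
    filter_upwards with ω
    rw [Real.norm_eq_abs, abs_of_pos (Real.exp_pos _)]
    simpa using Real.exp_le_exp.2 (neg_nonpos.2 (mul_nonneg hz (hZ ω)))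
  have hgmeas : AEStronglyMeasurable (fun p : Ω × ℝ =>
      (Real.exp (-(p.2 * Y p.1)) - Real.exp (-(p.2 * (X p.1 + Y p.1)))) / p.2)
      ((ℙ : Measure Ω).prod (volume.restrict (Ioi (0:ℝ)))) := by
    apply Measurable.aestronglyMeasurable
    fun_prop
  have hnn : ∀ ω, ∀ z ∈ Ioi (0:ℝ),
      0 ≤ (Real.exp (-(z * Y ω)) - Real.exp (-(z * (X ω + Y ω)))) / z := by
    intro ω z hz
    refine div_nonneg (sub_nonneg.2 (Real.exp_le_exp.2 ?_)) (le_of_lt hz)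
    exact neg_le_neg (mul_le_mul_of_nonneg_left (hYX ω) (le_of_lt hz))
  have hgint : Integrable (fun p : Ω × ℝ =>
      (Real.exp (-(p.2 * Y p.1)) - Real.exp (-(p.2 * (X p.1 + Y p.1)))) / p.2)
      ((ℙ : Measure Ω).prod (volume.restrict (Ioi (0:ℝ)))) := by
    rw [integrable_prod_iff hgmeas]
    constructor
    · refine ae_of_all _ fun ω => ?_
      have := frullani_integrable (hY ω) (hYX ω)
      exact this
    · refine hint.congr (ae_of_all _ fun ω => ?_)
      show Real.log (1 + X ω / Y ω)
        = ∫ z in Ioi (0:ℝ), ‖(Real.exp (-(z * Y ω)) - Real.exp (-(z * (X ω + Y ω)))) / z‖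
      rw [key ω]
      refine (setIntegral_congr_fun measurableSet_Ioi fun z hz => ?_)
      exact (Real.norm_of_nonneg (hnn ω z hz)).symm
  have hswap := integral_integral_swap
    (f := fun (ω : Ω) (z : ℝ) =>
      (Real.exp (-(z * Y ω)) - Real.exp (-(z * (X ω + Y ω)))) / z) hgint
  calc ∫ ω, Real.log (1 + X ω / Y ω) ∂ℙ
      = ∫ ω, ∫ z in Ioi (0:ℝ),
          (Real.exp (-(z * Y ω)) - Real.exp (-(z * (X ω + Y ω)))) / z ∂ℙ :=
        integral_congr_ae (ae_of_all _ key)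
    _ = ∫ z in Ioi (0:ℝ), ∫ ω,
          (Real.exp (-(z * Y ω)) - Real.exp (-(z * (X ω + Y ω)))) / z ∂ℙ := hswap
    _ = ∫ z in Set.Ioi (0 : ℝ),
        (1 - ∫ ω, Real.exp (-(z * X ω)) ∂ℙ) * (∫ ω, Real.exp (-(z * Y ω)) ∂ℙ) / z := by
      refine setIntegral_congr_fun measurableSet_Ioi fun z hz => ?_
      have hz : (0:ℝ) < z := hz
      have hiY := hexpint z Y hYm (fun ω => (hY ω).le) hz.le
      have hiXY := hexpint z (fun ω => X ω + Y ω) (hXm.add hYm)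
        (fun ω => add_nonneg (hX ω) (hY ω).le) hz.le
      rw [integral_div, integral_sub hiY hiXY]
      have hprod : ∫ ω, Real.exp (-(z * (X ω + Y ω))) ∂ℙ
          = (∫ ω, Real.exp (-(z * X ω)) ∂ℙ) * ∫ ω, Real.exp (-(z * Y ω)) ∂ℙ := by
        have hφ : Measurable (fun x : ℝ => Real.exp (-(z * x))) :=
          Real.measurable_exp.comp (measurable_const.mul measurable_id).neg
        have hcomp := hindep.comp hφ hφ
        have := hcomp.integral_mul_eq_mul_integral
          (hφ.comp hXm).aestronglyMeasurable (hφ.comp hYm).aestronglyMeasurable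
        have heq : ∀ ω, Real.exp (-(z * (X ω + Y ω)))
            = Real.exp (-(z * X ω)) * Real.exp (-(z * Y ω)) := by
          intro ω
          rw [← Real.exp_add]
          congr 1
          ring
        simp only [Function.comp] at this
        calc ∫ ω, Real.exp (-(z * (X ω + Y ω))) ∂ℙ
            = ∫ ω, Real.exp (-(z * X ω)) * Real.exp (-(z * Y ω)) ∂ℙ := by
              exact integral_congr_ae (ae_of_all _ heq)
          _ = (∫ ω, Real.exp (-(z * X ω)) ∂ℙ) * ∫ ω, Real.exp (-(z * Y ω)) ∂ℙ := this
      rw [hprod]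
      ring
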